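/- (Theorem 1, first bound.) In the smoothing spline truncation setting with Hilbert-space expansions, ‖f̃₀ − f̂₀‖² ≤ ζ₂ ‖Σ̃ − Σ‖_F². -/

import Mathlib

open Matrix BigOperators

/-- Squared Frobenius norm of a real matrix. -/
noncomputable def frobSq {m n : ℕ} (M : Matrix (Fin m) (Fin n) ℝ) : ℝ :=
  ∑ i, ∑ j, (M i j) ^ 2

/-- Squared Euclidean norm of a real vector. -/
noncomputable def vnormSq {m : ℕ} (v : Fin m → ℝ) : ℝ := ∑ i, (v i) ^ 2

lemma vnormSq_nonneg {m : ℕ} (v : Fin m → ℝ) : 0 ≤ vnormSq v :=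
  Finset.sum_nonneg fun _ _ => sq_nonneg _

lemma frobSq_nonneg {m n : ℕ} (M : Matrix (Fin m) (Fin n) ℝ) : 0 ≤ frobSq M :=
  Finset.sum_nonneg fun _ _ => Finset.sum_nonneg fun _ _ => sq_nonneg _

lemma vnormSq_eq_dot {m : ℕ} (v : Fin m → ℝ) : vnormSq v = v ⬝ᵥ v := by
  simp [vnormSq, dotProduct, pow_two]

lemma dot_mulVec_eq {a b : ℕ} (A : Matrix (Fin a) (Fin b) ℝ) (x : Fin a → ℝ) (y : Fin b → ℝ) :
    x ⬝ᵥ (A *ᵥ y) = (Aᵀ *ᵥ x) ⬝ᵥ y := by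
  rw [Matrix.dotProduct_mulVec, Matrix.mulVec_transpose]

lemma dot_self_mulVec {a b : ℕ} (N : Matrix (Fin a) (Fin b) ℝ) (v : Fin b → ℝ) :
    (N *ᵥ v) ⬝ᵥ (N *ᵥ v) = v ⬝ᵥ ((Nᵀ * N) *ᵥ v) := by
  rw [dot_mulVec_eq, Matrix.mulVec_mulVec, dotProduct_comm]

lemma vnormSq_mulVec_le {a b : ℕ} (M : Matrix (Fin a) (Fin b) ℝ) (x : Fin b → ℝ) :
    vnormSq (M *ᵥ x) ≤ frobSq M * vnormSq x := by
  rw [vnormSq, frobSq, Finset.sum_mul]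
  refine Finset.sum_le_sum fun i _ => ?_
  simpa [Matrix.mulVec, dotProduct, vnormSq] using
    Finset.sum_mul_sq_le_sq_mul_sq Finset.univ (fun j => M i j) x

lemma frobSq_mul_le {a b c : ℕ} (M : Matrix (Fin a) (Fin b) ℝ) (N : Matrix (Fin b) (Fin c) ℝ) :
    frobSq (M * N) ≤ frobSq M * frobSq N := by
  rw [frobSq, frobSq, Finset.sum_mul]
  refine Finset.sum_le_sum fun i _ => ?_
  calc ∑ j, ((M * N) i j) ^ 2 ≤ ∑ j, (∑ k, (M i k)^2) * (∑ k, (N k j)^2) := by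
        refine Finset.sum_le_sum fun j _ => ?_
        simpa [Matrix.mul_apply] using
          Finset.sum_mul_sq_le_sq_mul_sq Finset.univ (fun k => M i k) (fun k => N k j)
    _ = (∑ k, (M i k)^2) * ∑ j, ∑ k, (N k j)^2 := by rw [← Finset.mul_sum]
    _ = (∑ j, (M i j)^2) * frobSq N := by rw [frobSq, Finset.sum_comm]

lemma frobSq_transpose {a b : ℕ} (M : Matrix (Fin a) (Fin b) ℝ) : frobSq Mᵀ = frobSq M := by
  rw [frobSq, frobSq, Finset.sum_comm]; rfl

lemma frobSq_sub_comm {a b : ℕ} (M N : Matrix (Fin a) (Fin b) ℝ) :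
    frobSq (M - N) = frobSq (N - M) := by
  unfold frobSq
  refine Finset.sum_congr rfl fun i _ => Finset.sum_congr rfl fun j _ => ?_
  have : (M - N) i j = -((N - M) i j) := by simp [Matrix.sub_apply]
  rw [this, neg_sq]

lemma vnormSq_iso {a b : ℕ} {P : Matrix (Fin a) (Fin b) ℝ} (hP : Pᵀ * P = 1) (x : Fin b → ℝ) :
    vnormSq (P *ᵥ x) = vnormSq x := by
  rw [vnormSq_eq_dot, vnormSq_eq_dot, dot_self_mulVec, hP, Matrix.one_mulVec]

lemma quadform_eig {m : ℕ} {A : Matrix (Fin m) (Fin m) ℝ} (hA : A.IsHermitian) (x : Fin m → ℝ) :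
    ∃ u : Fin m → ℝ, x ⬝ᵥ (A *ᵥ x) = ∑ i, hA.eigenvalues i * (u i)^2 ∧
      vnormSq x = vnormSq u := by
  classical
  set V : Matrix (Fin m) (Fin m) ℝ := (Matrix.IsHermitian.eigenvectorUnitary hA :
    Matrix (Fin m) (Fin m) ℝ) with hV
  have hVs : star V = Vᵀ := by
    rw [Matrix.star_eq_conjTranspose, Matrix.conjTranspose_eq_transpose_of_trivial]
  have h2 : V * Vᵀ = 1 := by
    rw [← hVs]; exact Matrix.mem_unitaryGroup_iff.mp (Matrix.IsHermitian.eigenvectorUnitary hA).2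
  set u : Fin m → ℝ := Vᵀ *ᵥ x with hu
  refine ⟨u, ?_, ?_⟩
  · conv_lhs => rw [hA.spectral_theorem, Unitary.conjStarAlgAut_apply, hVs, ← Matrix.mulVec_mulVec, ← Matrix.mulVec_mulVec,
      dot_mulVec_eq]
    simp [← hu, dotProduct, Matrix.mulVec_diagonal]
    exact Finset.sum_congr rfl fun i _ => by ring
  · rw [vnormSq_eq_dot, vnormSq_eq_dot, hu, ← dot_mulVec_eq, Matrix.mulVec_mulVec, h2,
      Matrix.one_mulVec]

lemma quadform_le {m : ℕ} {A : Matrix (Fin m) (Fin m) ℝ} (hA : A.IsHermitian) {μ : ℝ}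
    (h : ∀ i, hA.eigenvalues i ≤ μ) (x : Fin m → ℝ) : x ⬝ᵥ (A *ᵥ x) ≤ μ * vnormSq x := by
  obtain ⟨u, he, hn⟩ := quadform_eig hA x
  rw [he, hn, vnormSq, Finset.mul_sum]
  exact Finset.sum_le_sum fun i _ => mul_le_mul_of_nonneg_right (h i) (sq_nonneg _)

lemma le_quadform {m : ℕ} {A : Matrix (Fin m) (Fin m) ℝ} (hA : A.IsHermitian) {μ : ℝ}
    (h : ∀ i, μ ≤ hA.eigenvalues i) (x : Fin m → ℝ) : μ * vnormSq x ≤ x ⬝ᵥ (A *ᵥ x) := by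
  obtain ⟨u, he, hn⟩ := quadform_eig hA x
  rw [he, hn, vnormSq, Finset.mul_sum]
  exact Finset.sum_le_sum fun i _ => mul_le_mul_of_nonneg_right (h i) (sq_nonneg _)

/-- If the quadratic form of `M` is bounded below by `μ > 0` and `M *ᵥ x = w`, then
`‖x‖² ≤ μ⁻² ‖w‖²`. -/
lemma vnormSq_le_of_solve {m : ℕ} {M : Matrix (Fin m) (Fin m) ℝ} {μ : ℝ} (hμ : 0 < μ)
    (hq : ∀ z, μ * vnormSq z ≤ z ⬝ᵥ (M *ᵥ z)) {x w : Fin m → ℝ} (hw : M *ᵥ x = w) :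
    vnormSq x ≤ μ⁻¹ ^ 2 * vnormSq w := by
  have h1 : μ * vnormSq x ≤ x ⬝ᵥ w := by rw [← hw]; exact hq x
  have hcs : (x ⬝ᵥ w) ^ 2 ≤ vnormSq x * vnormSq w := by
    simpa [dotProduct, vnormSq] using Finset.sum_mul_sq_le_sq_mul_sq Finset.univ x w
  rcases eq_or_lt_of_le (vnormSq_nonneg x) with h0 | h0
  · rw [← h0]
    have : 0 ≤ μ⁻¹ ^ 2 * vnormSq w := mul_nonneg (by positivity) (vnormSq_nonneg w)
    linarith
  · have h2 : (μ * vnormSq x) ^ 2 ≤ (x ⬝ᵥ w) ^ 2 := by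
      have := mul_le_mul h1 h1 (by positivity) ((mul_nonneg hμ.le (vnormSq_nonneg x)).trans h1)
      calc (μ * vnormSq x)^2 = (μ * vnormSq x) * (μ * vnormSq x) := sq _
        _ ≤ (x ⬝ᵥ w) * (x ⬝ᵥ w) := this
        _ = (x ⬝ᵥ w)^2 := (sq _).symm
    have h3 : μ^2 * vnormSq x * vnormSq x ≤ vnormSq x * vnormSq w := by
      calc μ^2 * vnormSq x * vnormSq x = (μ * vnormSq x)^2 := by ring
        _ ≤ (x ⬝ᵥ w)^2 := h2
        _ ≤ vnormSq x * vnormSq w := hcs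
    have h4 : μ^2 * vnormSq x ≤ vnormSq w := by
      have := (mul_le_mul_iff_of_pos_right h0).mp (by linarith [h3] :
        (μ^2 * vnormSq x) * vnormSq x ≤ vnormSq w * vnormSq x)
      linarith
    rw [inv_pow]
    rw [← sub_nonneg]
    have hμ2 : 0 < μ^2 := by positivity
    have hkey : (μ^2)⁻¹ * vnormSq w - vnormSq x = (μ^2)⁻¹ * (vnormSq w - μ^2 * vnormSq x) := by
      field_simp
    rw [hkey]
    apply mul_nonneg (by positivity)
    linarith

lemma vnormSq_add_le {m : ℕ} (u w : Fin m → ℝ) :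
    vnormSq (u + w) ≤ 2 * vnormSq u + 2 * vnormSq w := by
  unfold vnormSq
  rw [Finset.mul_sum, Finset.mul_sum, ← Finset.sum_add_distrib]
  refine Finset.sum_le_sum fun i _ => ?_
  have : (u + w) i = u i + w i := rfl
  rw [this]
  nlinarith [sq_nonneg (u i - w i)]
set_option maxHeartbeats 2000000 in
/-- Theorem 1, first bound: in the smoothing spline truncation setting with
Hilbert-space expansions, `‖f̃₀ − f̂₀‖² ≤ ζ₂ ‖Σ̃ − Σ‖_F²`. -/
theorem stmt9
    (n p : ℕ) (hp : 1 ≤ p) (hpn : p < n)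
    (y : Fin n → ℝ) (lam : ℝ) (hlam : 0 < lam)
    (T Q₁ : Matrix (Fin n) (Fin p) ℝ) (Q₂ : Matrix (Fin n) (Fin (n - p)) ℝ)
    (R : Matrix (Fin p) (Fin p) ℝ)
    (hQ₁ : Q₁ᵀ * Q₁ = 1) (hQ₂ : Q₂ᵀ * Q₂ = 1) (hQ₁₂ : Q₁ᵀ * Q₂ = 0)
    (hQ : Q₁ * Q₁ᵀ + Q₂ * Q₂ᵀ = 1)
    (hR : IsUnit R) (hRtri : R.BlockTriangular id) (hT : T = Q₁ * R)
    (K : ℕ) (hK : 1 ≤ K) (κ : ℝ) (hκ : 0 < κ)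
    (δ : ℕ → ℝ) (hδ0 : ∀ k, 0 ≤ δ k) (hδmono : ∀ k, δ (k + 1) ≤ δ k) (hδsum : Summable δ)
    (U : Fin n → ℕ → ℝ) (hU : ∀ i k, |U i k| ≤ κ)
    (S St : Matrix (Fin n) (Fin n) ℝ)
    (hS : ∀ i j, S i j = ∑' k, δ k * U i k * U j k)
    (hSt : ∀ i j, St i j = ∑ k ∈ Finset.range K, δ k * U i k * U j k)
    (hSpsd : S.PosSemidef) (hStpsd : St.PosSemidef)
    (hpd : (Q₂ᵀ * S * Q₂).PosDef) (hpdt : (Q₂ᵀ * St * Q₂).PosDef)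
    (hA : (T * ((Tᵀ * T)⁻¹ * (Tᵀ * T)⁻¹) * Tᵀ).IsHermitian)
    (c : Fin n → ℝ) (d : Fin p → ℝ)
    (hcd : T *ᵥ d + (S + ((n : ℝ) * lam) • 1) *ᵥ c = y) (hc0 : Tᵀ *ᵥ c = 0)
    (ct : Fin n → ℝ) (dt : Fin p → ℝ)
    (hcdt : T *ᵥ dt + (St + ((n : ℝ) * lam) • 1) *ᵥ ct = y) (hct0 : Tᵀ *ᵥ ct = 0)
    {H : Type*} [NormedAddCommGroup H] [InnerProductSpace ℝ H] [CompleteSpace H]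
    (φ : Fin p → H) (Φ : ℕ → H) (hφ : Orthonormal ℝ φ) (hΦ : Orthonormal ℝ Φ) :
    ‖(∑ ν, dt ν • φ ν) - (∑ ν, d ν • φ ν)‖ ^ 2 ≤
      (2 * (⨆ i, hA.eigenvalues i) *
        (((frobSq Q₂) ^ 3 * vnormSq (Q₂ᵀ *ᵥ y)) *
          (∑ k, ((hpd.1.eigenvalues k) ^ 2)⁻¹) *
          (∑ k, ((hpdt.1.eigenvalues k) ^ 2)⁻¹) *
          frobSq St + vnormSq c)) * frobSq (St - S) := by
  classical
  have hnp : 0 < n - p := Nat.sub_pos_of_lt hpn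
  haveI : Nonempty (Fin (n - p)) := Fin.pos_iff_nonempty.mp hnp
  haveI : Nonempty (Fin n) := Fin.pos_iff_nonempty.mp (lt_of_le_of_lt (Nat.zero_le p) hpn)
  set sc : ℝ := (n : ℝ) * lam with hsc
  have hs0 : 0 ≤ sc := by positivity
  -- Reduce LHS to vnormSq (dt - d)
  have hL : ‖(∑ ν, dt ν • φ ν) - (∑ ν, d ν • φ ν)‖ ^ 2
      = vnormSq (fun ν => dt ν - d ν) := by
    have h1 : (∑ ν, dt ν • φ ν) - (∑ ν, d ν • φ ν) = ∑ ν, (dt ν - d ν) • φ ν := by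
      rw [← Finset.sum_sub_distrib]
      exact Finset.sum_congr rfl fun ν _ => (sub_smul _ _ _).symm
    rw [h1, ← real_inner_self_eq_norm_sq,
      hφ.inner_sum (fun ν => dt ν - d ν) (fun ν => dt ν - d ν) Finset.univ]
    simp [vnormSq, pow_two]
  -- basic invertibility facts
  have hRdet : IsUnit R.det := (Matrix.isUnit_iff_isUnit_det R).mp hR
  have hRTdet : IsUnit Rᵀ.det := by rwa [Matrix.det_transpose]
  have hTt : Tᵀ = Rᵀ * Q₁ᵀ := by rw [hT, Matrix.transpose_mul]
  -- Q₁ᵀ *ᵥ c = 0 and Q₁ᵀ *ᵥ ct = 0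
  have hQ1v : ∀ u : Fin n → ℝ, Tᵀ *ᵥ u = 0 → Q₁ᵀ *ᵥ u = 0 := by
    intro u hu
    have h2 : Rᵀ *ᵥ (Q₁ᵀ *ᵥ u) = 0 := by
      rw [Matrix.mulVec_mulVec, ← hTt, hu]
    have h3 : (Rᵀ)⁻¹ *ᵥ (Rᵀ *ᵥ (Q₁ᵀ *ᵥ u)) = 0 := by rw [h2, Matrix.mulVec_zero]
    rwa [Matrix.mulVec_mulVec, Matrix.nonsing_inv_mul _ hRTdet, Matrix.one_mulVec] at h3
  have hQ1c : Q₁ᵀ *ᵥ c = 0 := hQ1v c hc0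
  have hQ1ct : Q₁ᵀ *ᵥ ct = 0 := hQ1v ct hct0
  -- c and ct live in range Q₂
  set a : Fin (n - p) → ℝ := Q₂ᵀ *ᵥ c with ha
  set at' : Fin (n - p) → ℝ := Q₂ᵀ *ᵥ ct with hat
  have hrange : ∀ u : Fin n → ℝ, Q₁ᵀ *ᵥ u = 0 → u = Q₂ *ᵥ (Q₂ᵀ *ᵥ u) := by
    intro u hu
    have h1 : (1 : Matrix (Fin n) (Fin n) ℝ) *ᵥ u = u := Matrix.one_mulVec u
    rw [← hQ] at h1
    rw [Matrix.add_mulVec, ← Matrix.mulVec_mulVec, ← Matrix.mulVec_mulVec, hu,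
      Matrix.mulVec_zero, zero_add] at h1
    exact h1.symm
  have hc2 : c = Q₂ *ᵥ a := hrange c hQ1c
  have hct2 : ct = Q₂ *ᵥ at' := hrange ct hQ1ct
  -- reduced systems
  set M : Matrix (Fin (n - p)) (Fin (n - p)) ℝ := Q₂ᵀ * S * Q₂ + sc • 1 with hM
  set Mt : Matrix (Fin (n - p)) (Fin (n - p)) ℝ := Q₂ᵀ * St * Q₂ + sc • 1 with hMt
  have hQ2T : Q₂ᵀ * T = 0 := by
    rw [hT, ← Matrix.mul_assoc]
    have : Q₂ᵀ * Q₁ = 0 := by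
      have := congrArg Matrix.transpose hQ₁₂
      simpa using this
    rw [this, Matrix.zero_mul]
  have hred : ∀ (X : Matrix (Fin n) (Fin n) ℝ) (u : Fin n → ℝ) (e : Fin p → ℝ),
      T *ᵥ e + (X + sc • 1) *ᵥ u = y → Q₁ᵀ *ᵥ u = 0 →
      (Q₂ᵀ * X * Q₂ + sc • 1) *ᵥ (Q₂ᵀ *ᵥ u) = Q₂ᵀ *ᵥ y := by
    intro X u e heq hu0
    have h1 := congrArg (fun w => Q₂ᵀ *ᵥ w) heq
    rw [Matrix.mulVec_add, Matrix.mulVec_mulVec, hQ2T, Matrix.zero_mulVec, zero_add] at h1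
    have hu2 : u = Q₂ *ᵥ (Q₂ᵀ *ᵥ u) := hrange u hu0
    rw [Matrix.add_mulVec, Matrix.smul_mulVec, Matrix.one_mulVec] at h1
    rw [Matrix.mulVec_add, Matrix.mulVec_smul] at h1
    nth_rewrite 1 [hu2] at h1
    rw [Matrix.mulVec_mulVec, Matrix.mulVec_mulVec] at h1
    rw [Matrix.add_mulVec, Matrix.smul_mulVec, Matrix.one_mulVec]
    exact h1
  have hMa : M *ᵥ a = Q₂ᵀ *ᵥ y := hred S c d hcd hQ1c
  have hMta : Mt *ᵥ at' = Q₂ᵀ *ᵥ y := hred St ct dt hcdt hQ1ct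
  -- difference equation
  set W : Matrix (Fin (n - p)) (Fin (n - p)) ℝ := Q₂ᵀ * (St - S) * Q₂ with hW
  have hdiff : M *ᵥ (a - at') = W *ᵥ at' := by
    have h1 : M *ᵥ (a - at') = M *ᵥ a - M *ᵥ at' := Matrix.mulVec_sub M a at'
    have h2 : M *ᵥ a - M *ᵥ at' = Mt *ᵥ at' - M *ᵥ at' := by rw [hMa, hMta]
    have h3 : Mt *ᵥ at' - M *ᵥ at' = (Mt - M) *ᵥ at' := (Matrix.sub_mulVec Mt M at').symm
    have h4 : Mt - M = W := by
      rw [hMt, hM, hW]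
      have : Q₂ᵀ * (St - S) * Q₂ = Q₂ᵀ * St * Q₂ - Q₂ᵀ * S * Q₂ := by
        rw [Matrix.mul_sub, Matrix.sub_mul]
      rw [this]; abel
    rw [h1, h2, h3, h4]
  -- eigenvalue lower bounds for the reduced matrices
  set B : ℝ := ∑ k, ((hpd.1.eigenvalues k) ^ 2)⁻¹ with hB
  set Bt : ℝ := ∑ k, ((hpdt.1.eigenvalues k) ^ 2)⁻¹ with hBt
  have hBnn : 0 ≤ B := Finset.sum_nonneg fun k _ => by positivity
  have hBtnn : 0 ≤ Bt := Finset.sum_nonneg fun k _ => by positivity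
  set μ : ℝ := Finset.univ.inf' Finset.univ_nonempty hpd.1.eigenvalues with hμ
  set μt : ℝ := Finset.univ.inf' Finset.univ_nonempty hpdt.1.eigenvalues with hμt
  have hμpos : 0 < μ := by
    rw [hμ, Finset.lt_inf'_iff]
    exact fun i _ => hpd.eigenvalues_pos i
  have hμtpos : 0 < μt := by
    rw [hμt, Finset.lt_inf'_iff]
    exact fun i _ => hpdt.eigenvalues_pos i
  have hμle : ∀ i, μ ≤ hpd.1.eigenvalues i := fun i =>
    Finset.inf'_le _ (Finset.mem_univ i)
  have hμtle : ∀ i, μt ≤ hpdt.1.eigenvalues i := fun i =>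
    Finset.inf'_le _ (Finset.mem_univ i)
  have hμB : μ⁻¹ ^ 2 ≤ B := by
    obtain ⟨j, -, hj⟩ := Finset.exists_mem_eq_inf' Finset.univ_nonempty hpd.1.eigenvalues
    rw [hB]
    have h1 : μ⁻¹ ^ 2 = ((hpd.1.eigenvalues j) ^ 2)⁻¹ := by rw [hμ, ← hj, inv_pow]
    rw [h1]
    exact Finset.single_le_sum (f := fun k => ((hpd.1.eigenvalues k) ^ 2)⁻¹)
      (fun k _ => by positivity) (Finset.mem_univ j)
  have hμtB : μt⁻¹ ^ 2 ≤ Bt := by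
    obtain ⟨j, -, hj⟩ := Finset.exists_mem_eq_inf' Finset.univ_nonempty hpdt.1.eigenvalues
    rw [hBt]
    have h1 : μt⁻¹ ^ 2 = ((hpdt.1.eigenvalues j) ^ 2)⁻¹ := by rw [hμt, ← hj, inv_pow]
    rw [h1]
    exact Finset.single_le_sum (f := fun k => ((hpdt.1.eigenvalues k) ^ 2)⁻¹)
      (fun k _ => by positivity) (Finset.mem_univ j)
  -- quadratic form lower bounds for M, Mt
  have hqM : ∀ z, μ * vnormSq z ≤ z ⬝ᵥ (M *ᵥ z) := by
    intro z
    rw [hM, Matrix.add_mulVec, Matrix.smul_mulVec, Matrix.one_mulVec, dotProduct_add]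
    have h1 : μ * vnormSq z ≤ z ⬝ᵥ ((Q₂ᵀ * S * Q₂) *ᵥ z) := le_quadform hpd.1 hμle z
    have h2 : 0 ≤ z ⬝ᵥ (sc • z) := by
      rw [dotProduct_smul, ← vnormSq_eq_dot]
      exact smul_nonneg hs0 (vnormSq_nonneg z)
    linarith
  have hqMt : ∀ z, μt * vnormSq z ≤ z ⬝ᵥ (Mt *ᵥ z) := by
    intro z
    rw [hMt, Matrix.add_mulVec, Matrix.smul_mulVec, Matrix.one_mulVec, dotProduct_add]
    have h1 : μt * vnormSq z ≤ z ⬝ᵥ ((Q₂ᵀ * St * Q₂) *ᵥ z) := le_quadform hpdt.1 hμtle z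
    have h2 : 0 ≤ z ⬝ᵥ (sc • z) := by
      rw [dotProduct_smul, ← vnormSq_eq_dot]
      exact smul_nonneg hs0 (vnormSq_nonneg z)
    linarith
  -- bound on at' and a - at'
  have hat_bd : vnormSq at' ≤ μt⁻¹ ^ 2 * vnormSq (Q₂ᵀ *ᵥ y) :=
    vnormSq_le_of_solve hμtpos hqMt hMta
  have hdiff_bd : vnormSq (a - at') ≤ μ⁻¹ ^ 2 * vnormSq (W *ᵥ at') :=
    vnormSq_le_of_solve hμpos hqM hdiff
  -- the vector v = T (dt - d)
  set e : Fin p → ℝ := dt - d with he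
  set v : Fin n → ℝ := T *ᵥ e with hv
  have hveq : v = (S + sc • 1) *ᵥ c - (St + sc • 1) *ᵥ ct := by
    rw [hv, he, Matrix.mulVec_sub, sub_eq_sub_iff_add_eq_add, hcdt,
      add_comm _ (T *ᵥ d), hcd]
  set z : Fin n → ℝ := S *ᵥ c - St *ᵥ ct with hz
  have hQ1vz : Q₁ᵀ *ᵥ v = Q₁ᵀ *ᵥ z := by
    rw [hveq, hz]
    simp only [Matrix.mulVec_sub, Matrix.mulVec_add, Matrix.add_mulVec,
      Matrix.smul_mulVec, Matrix.one_mulVec, Matrix.mulVec_smul, hQ1c, hQ1ct]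
    simp
  have hvQ1 : v = Q₁ *ᵥ (Q₁ᵀ *ᵥ v) := by
    have h1 : v = Q₁ *ᵥ (R *ᵥ e) := by rw [hv, hT, ← Matrix.mulVec_mulVec]
    have h2 : Q₁ᵀ *ᵥ v = R *ᵥ e := by
      rw [h1, Matrix.mulVec_mulVec, hQ₁, Matrix.one_mulVec]
    rw [h2, ← h1]
  have hvz : v = Q₁ *ᵥ (Q₁ᵀ *ᵥ z) := by rw [hvQ1, hQ1vz]
  have hsplit : ∀ (u : Fin n → ℝ), vnormSq (Q₁ᵀ *ᵥ u) + vnormSq (Q₂ᵀ *ᵥ u) = vnormSq u := by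
    intro u
    rw [vnormSq_eq_dot, vnormSq_eq_dot, dot_self_mulVec, dot_self_mulVec,
      Matrix.transpose_transpose, Matrix.transpose_transpose, ← dotProduct_add,
      ← Matrix.add_mulVec, hQ, Matrix.one_mulVec, ← vnormSq_eq_dot]
  have hvle : vnormSq v ≤ vnormSq z := by
    have h1 : vnormSq v = vnormSq (Q₁ᵀ *ᵥ z) := by rw [hvz, vnormSq_iso hQ₁]
    have h2 := hsplit z
    have h3 := vnormSq_nonneg (Q₂ᵀ *ᵥ z)
    linarith
  -- z decomposition
  have hzdec : z = (S - St) *ᵥ c + St *ᵥ (c - ct) := by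
    rw [hz, Matrix.sub_mulVec, Matrix.mulVec_sub]
    abel
  have hz2 : vnormSq z ≤ 2 * vnormSq ((S - St) *ᵥ c) + 2 * vnormSq (St *ᵥ (c - ct)) := by
    rw [hzdec]; exact vnormSq_add_le _ _
  -- recover e from v
  set G : Matrix (Fin p) (Fin p) ℝ := Tᵀ * T with hG
  have hGR : G = Rᵀ * R := by
    rw [hG, hTt, hT, Matrix.mul_assoc, ← Matrix.mul_assoc Q₁ᵀ Q₁ R, hQ₁, Matrix.one_mul]
  have hGdet : IsUnit G.det := by rw [hGR, Matrix.det_mul]; exact hRTdet.mul hRdet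
  have hGsym : Gᵀ = G := by rw [hG, Matrix.transpose_mul, Matrix.transpose_transpose]
  have hGinvsym : (G⁻¹)ᵀ = G⁻¹ := by rw [Matrix.transpose_nonsing_inv, hGsym]
  have he2 : e = (G⁻¹ * Tᵀ) *ᵥ v := by
    rw [hv, Matrix.mulVec_mulVec, Matrix.mul_assoc, ← hG,
      Matrix.nonsing_inv_mul _ hGdet, Matrix.one_mulVec]
  have hN : (G⁻¹ * Tᵀ)ᵀ * (G⁻¹ * Tᵀ) = T * (G⁻¹ * G⁻¹) * Tᵀ := by
    rw [Matrix.transpose_mul, Matrix.transpose_transpose, hGinvsym]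
    simp [Matrix.mul_assoc]
  have hquad : vnormSq e = v ⬝ᵥ ((T * (G⁻¹ * G⁻¹) * Tᵀ) *ᵥ v) := by
    rw [vnormSq_eq_dot, he2, dot_self_mulVec, hN]
  -- sup of eigenvalues of A
  set lm : ℝ := ⨆ i, hA.eigenvalues i with hlm
  have hlmle : ∀ i, hA.eigenvalues i ≤ lm := fun i =>
    le_ciSup (Set.Finite.bddAbove (Set.finite_range _)) i
  have hApsd : (T * ((Tᵀ * T)⁻¹ * (Tᵀ * T)⁻¹) * Tᵀ).PosSemidef := by
    have h1 := Matrix.posSemidef_conjTranspose_mul_self (G⁻¹ * Tᵀ)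
    rw [Matrix.conjTranspose_eq_transpose_of_trivial, hN] at h1
    exact h1
  have hlmnn : 0 ≤ lm := by
    have i0 : Fin n := ⟨0, by omega⟩
    exact le_trans (hApsd.eigenvalues_nonneg i0) (hlmle i0)
  have hekey : vnormSq e ≤ lm * vnormSq v := by
    rw [hquad]
    exact quadform_le hA hlmle v
  -- frobSq Q₂ ≥ 1
  have hfq : frobSq Q₂ = ((n - p : ℕ) : ℝ) := by
    have h1 := congrArg Matrix.trace hQ₂
    rw [Matrix.trace_one] at h1
    have h2 : (Q₂ᵀ * Q₂).trace = ∑ j, ∑ i, (Q₂ i j) ^ 2 := by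
      simp [Matrix.trace, Matrix.mul_apply, Matrix.diag, pow_two]
    rw [h2] at h1
    rw [frobSq, Finset.sum_comm, h1]
    simp
  have hfq1 : (1 : ℝ) ≤ frobSq Q₂ := by
    rw [hfq]
    exact_mod_cast hnp
  -- assemble
  set F : ℝ := frobSq (St - S) with hF
  have hFnn : 0 ≤ F := frobSq_nonneg _
  set Yv : ℝ := vnormSq (Q₂ᵀ *ᵥ y) with hYv
  have hYnn : 0 ≤ Yv := vnormSq_nonneg _
  set fq : ℝ := frobSq Q₂ with hfqd
  set fS : ℝ := frobSq St with hfSd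
  have hfSnn : 0 ≤ fS := frobSq_nonneg _
  have hfqnn : (0:ℝ) ≤ fq := le_trans zero_le_one hfq1
  have hw2 : frobSq W ≤ fq * F * fq := by
    calc frobSq W ≤ frobSq (Q₂ᵀ * (St - S)) * frobSq Q₂ := frobSq_mul_le _ _
      _ ≤ (frobSq Q₂ᵀ * frobSq (St - S)) * frobSq Q₂ :=
          mul_le_mul_of_nonneg_right (frobSq_mul_le _ _) (frobSq_nonneg _)
      _ = fq * F * fq := by rw [frobSq_transpose]
  have hccst : vnormSq (c - ct) = vnormSq (a - at') := by
    have h1 : c - ct = Q₂ *ᵥ (a - at') := by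
      rw [Matrix.mulVec_sub, ← hc2, ← hct2]
    rw [h1, vnormSq_iso hQ₂]
  have hWnn : 0 ≤ fq * F * fq := mul_nonneg (mul_nonneg hfqnn hFnn) hfqnn
  have hn1 : vnormSq (a - at') ≤ B * ((fq * F * fq) * (Bt * Yv)) := by
    have h1 : vnormSq (W *ᵥ at') ≤ (fq * F * fq) * (μt⁻¹ ^ 2 * Yv) :=
      le_trans (vnormSq_mulVec_le W at') (mul_le_mul hw2 hat_bd (vnormSq_nonneg at') hWnn)
    have h2 : (fq*F*fq) * (μt⁻¹^2 * Yv) ≤ (fq*F*fq) * (Bt * Yv) :=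
      mul_le_mul_of_nonneg_left (mul_le_mul_of_nonneg_right hμtB hYnn) hWnn
    calc vnormSq (a - at') ≤ μ⁻¹^2 * vnormSq (W *ᵥ at') := hdiff_bd
      _ ≤ B * ((fq*F*fq) * (Bt*Yv)) := by
          apply mul_le_mul hμB (le_trans h1 h2) (vnormSq_nonneg _) hBnn
  have hb1 : vnormSq ((S - St) *ᵥ c) ≤ F * vnormSq c := by
    have h1 := vnormSq_mulVec_le (S - St) c
    rwa [frobSq_sub_comm] at h1
  have hb2 : vnormSq (St *ᵥ (c - ct)) ≤ fS * (B * ((fq*F*fq)*(Bt*Yv))) := by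
    calc vnormSq (St *ᵥ (c - ct)) ≤ fS * vnormSq (c - ct) := vnormSq_mulVec_le _ _
      _ = fS * vnormSq (a - at') := by rw [hccst]
      _ ≤ fS * (B * ((fq*F*fq)*(Bt*Yv))) := mul_le_mul_of_nonneg_left hn1 hfSnn
  have hvfinal : vnormSq v ≤ 2 * (F * vnormSq c) + 2 * (fS * (B * ((fq*F*fq)*(Bt*Yv)))) := by
    linarith [hvle, hz2, hb1, hb2]
  have hefinal : vnormSq e ≤ lm * (2*(F*vnormSq c) + 2*(fS*(B*((fq*F*fq)*(Bt*Yv))))) :=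
    le_trans hekey (mul_le_mul_of_nonneg_left hvfinal hlmnn)
  have hC : 0 ≤ vnormSq c := vnormSq_nonneg c
  clear_value F Yv fq fS lm B Bt
  have hkey2 : lm * (2*(F*vnormSq c) + 2*(fS*(B*((fq*F*fq)*(Bt*Yv)))))
      ≤ (2 * lm * ((fq^3 * Yv) * B * Bt * fS + vnormSq c)) * F := by
    have h1 : 0 ≤ 2*lm*B*Bt*Yv*fS*F*(fq*fq) :=
      mul_nonneg (mul_nonneg (mul_nonneg (mul_nonneg (mul_nonneg (mul_nonneg
        (mul_nonneg (by norm_num : (0:ℝ) ≤ 2) hlmnn) hBnn) hBtnn) hYnn) hfSnn) hFnn)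
        (mul_nonneg hfqnn hfqnn)
    have hprod : 0 ≤ 2*lm*B*Bt*Yv*fS*F*(fq*fq)*(fq - 1) :=
      mul_nonneg h1 (by linarith)
    have hiden : (2*lm*((fq^3*Yv)*B*Bt*fS + vnormSq c))*F
        - lm*(2*(F*vnormSq c) + 2*(fS*(B*((fq*F*fq)*(Bt*Yv)))))
        = 2*lm*B*Bt*Yv*fS*F*(fq*fq)*(fq - 1) := by ring
    linarith [hprod, hiden]
  rw [hL]
  exact le_trans hefinal hkey2
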